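/- Let C > 0 and for each κ ≥ 4 let h_κ : [0, π] → ℝ be continuously differentiable on [0, π] and twice differentiable on (0, π), solving the profile equation h''(θ) + (cos θ / sin θ)·h'(θ) − sin(2h(θ))/(2 sin²θ) − (κ/2)·sin(2h(θ) − 2θ) = 0 on (0, π), with h_κ(0) = h_κ(π) = π, h_κ(θ) + h_κ(π − θ) = 2π for all θ ∈ [0, π], π ≤ h_κ(θ) ≤ π + θ for all θ ∈ [0, π/2], and E(h_κ) ≤ C·√κ. Then for every θ* ∈ (0, π/2), the supremum over θ ∈ [0, θ*] of |π + θ − h_κ(θ)| tends to 0 as κ → ∞. -/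

import Mathlib

open Real Set Filter

/-- Monotonicity of `w θ = sin θ * (1 - f' θ)` from the profile ODE. -/
lemma aux_w_mono (κ : ℝ) (f : ℝ → ℝ) (δ θb : ℝ) (hδ : 0 < δ) (hθb : θb < π / 2)
    (hder2 : ∀ x ∈ Set.Ioo (0 : ℝ) π, DifferentiableAt ℝ (deriv f) x)
    (heq : ∀ x ∈ Set.Ioo (0 : ℝ) π,
      deriv (deriv f) x + (Real.cos x / Real.sin x) * deriv f x
        - Real.sin (2 * f x) / (2 * Real.sin x ^ 2)
        - (κ / 2) * Real.sin (2 * f x - 2 * x) = 0)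
    (hwedge : ∀ x ∈ Set.Icc δ θb, π ≤ f x ∧ f x ≤ π + x)
    (hκ : 1 ≤ κ * (Real.sin δ ^ 2 * Real.cos θb)) :
    MonotoneOn (fun x => Real.sin x * (1 - deriv f x)) (Set.Icc δ θb) := by
  have hπ : (0:ℝ) < π := Real.pi_pos
  have hsub : Set.Icc δ θb ⊆ Set.Ioo 0 π := by
    intro x hx
    exact ⟨lt_of_lt_of_le hδ hx.1, lt_of_le_of_lt hx.2 (hθb.trans (by linarith))⟩
  have hD : ∀ x ∈ Set.Ioo δ θb,
      HasDerivAt (fun x => Real.sin x * (1 - deriv f x))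
        (Real.cos x * (1 - deriv f x) - Real.sin x * deriv (deriv f) x) x := by
    intro x hx
    have hx' : x ∈ Set.Ioo 0 π := hsub (Set.Ioo_subset_Icc_self hx)
    have := (Real.hasDerivAt_sin x).mul (((hder2 x hx').hasDerivAt).const_sub 1)
    exact this.congr_deriv (by ring)
  apply monotoneOn_of_deriv_nonneg (convex_Icc δ θb)
  · intro x hx
    have hx' : x ∈ Set.Ioo 0 π := hsub hx
    exact (Real.continuous_sin.continuousAt.mul
      (continuousAt_const.sub (hder2 x hx').continuousAt)).continuousWithinAt
  · rw [interior_Icc]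
    intro x hx
    exact ((hD x hx).differentiableAt).differentiableWithinAt
  · rw [interior_Icc]
    intro x hx
    rw [(hD x hx).deriv]
    have hx' : x ∈ Set.Ioo 0 π := hsub (Set.Ioo_subset_Icc_self hx)
    have hsinx : 0 < Real.sin x := Real.sin_pos_of_pos_of_lt_pi hx'.1 hx'.2
    have hsx : Real.sin x ≠ 0 := ne_of_gt hsinx
    -- rewrite second derivative using the ODE
    have heqx := heq x hx'
    have h2 : deriv (deriv f) x = -(Real.cos x / Real.sin x) * deriv f x
        + Real.sin (2 * f x) / (2 * Real.sin x ^ 2)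
        + (κ / 2) * Real.sin (2 * f x - 2 * x) := by linarith
    have hrw : Real.cos x * (1 - deriv f x) - Real.sin x * deriv (deriv f) x
        = Real.cos x - Real.sin (2 * f x) / (2 * Real.sin x)
          - (κ / 2) * Real.sin x * Real.sin (2 * f x - 2 * x) := by
      rw [h2]
      field_simp
      ring
    rw [hrw]
    -- wedge data
    obtain ⟨hxδ, hxθb⟩ := hx
    obtain ⟨hx0, hxπ⟩ := hx'
    have hwx := hwedge x ⟨hxδ.le, hxθb.le⟩
    set g : ℝ := π + x - f x with hgdef
    have hg0 : 0 ≤ g := by rw [hgdef]; linarith [hwx.2]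
    have hgx : g ≤ x := by rw [hgdef]; linarith [hwx.1]
    have e1 : Real.sin (2 * f x) = Real.sin (2 * x - 2 * g) := by
      rw [show 2 * f x = (2 * x - 2 * g) + 2 * π by rw [hgdef]; ring, Real.sin_add_two_pi]
    have e2 : Real.sin (2 * f x - 2 * x) = -Real.sin (2 * g) := by
      rw [show 2 * f x - 2 * x = -(2 * g) + 2 * π by rw [hgdef]; ring,
        Real.sin_add_two_pi, Real.sin_neg]
    rw [e1, e2]
    have id1 : Real.sin (2 * x) - Real.sin (2 * x - 2 * g)
        = 2 * Real.sin g * Real.cos (2 * x - g) := by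
      rw [Real.sin_sub_sin, show (2 * x - (2 * x - 2 * g)) / 2 = g by ring,
        show (2 * x + (2 * x - 2 * g)) / 2 = 2 * x - g by ring]
    have hform : Real.cos x - Real.sin (2 * x - 2 * g) / (2 * Real.sin x)
          - κ / 2 * Real.sin x * -Real.sin (2 * g)
        = (2 * Real.sin x * Real.cos x - Real.sin (2 * x - 2 * g)
            + κ * Real.sin x ^ 2 * Real.sin (2 * g)) / (2 * Real.sin x) := by
      field_simp
      ring
    rw [hform]
    apply div_nonneg _ (by positivity)
    have hd : Real.sin (2 * x - 2 * g)
        = Real.sin (2 * x) - 2 * Real.sin g * Real.cos (2 * x - g) := by linarith [id1]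
    have hval : 2 * Real.sin x * Real.cos x - Real.sin (2 * x - 2 * g)
          + κ * Real.sin x ^ 2 * Real.sin (2 * g)
        = 2 * Real.sin g * (Real.cos (2 * x - g) + κ * Real.sin x ^ 2 * Real.cos g) := by
      rw [hd, Real.sin_two_mul g, Real.sin_two_mul x]
      ring
    rw [hval]
    clear heq hD hder2 hwedge heqx h2 hrw hform e1 e2 hd hval id1
    have hsing : 0 ≤ Real.sin g :=
      Real.sin_nonneg_of_nonneg_of_le_pi hg0 (by linarith)
    have hcos1 : -1 ≤ Real.cos (2 * x - g) := Real.neg_one_le_cos _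
    have hsinδx : Real.sin δ ≤ Real.sin x :=
      Real.sin_le_sin_of_le_of_le_pi_div_two (by linarith) (by linarith) hxδ.le
    have hcosg : Real.cos θb ≤ Real.cos g :=
      Real.cos_le_cos_of_nonneg_of_le_pi hg0 (by linarith) (by linarith)
    have hsδ : 0 < Real.sin δ := Real.sin_pos_of_pos_of_lt_pi hδ (by linarith)
    have hcθb : 0 < Real.cos θb := Real.cos_pos_of_mem_Ioo ⟨by linarith, hθb⟩
    have hA : 0 < Real.sin δ ^ 2 * Real.cos θb := by positivity
    have hκ0 : 0 < κ := by
      by_contra hk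
      push_neg at hk
      nlinarith [mul_nonpos_iff.2 (Or.inr ⟨hk, hA.le⟩)]
    have t1 : Real.sin δ ^ 2 ≤ Real.sin x ^ 2 := by nlinarith [hsδ, hsinδx]
    have t2 : Real.sin δ ^ 2 * Real.cos θb ≤ Real.sin x ^ 2 * Real.cos g :=
      mul_le_mul t1 hcosg hcθb.le (by positivity)
    have hfac : 1 ≤ κ * Real.sin x ^ 2 * Real.cos g := by
      calc (1:ℝ) ≤ κ * (Real.sin δ ^ 2 * Real.cos θb) := hκ
        _ ≤ κ * (Real.sin x ^ 2 * Real.cos g) := by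
            exact mul_le_mul_of_nonneg_left t2 hκ0.le
        _ = κ * Real.sin x ^ 2 * Real.cos g := by ring
    have hfac2 : 0 ≤ Real.cos (2 * x - g) + κ * Real.sin x ^ 2 * Real.cos g := by linarith
    positivity

/-- Maximum principle: if `w θ = sin θ * (1 - f' θ)` is monotone on `[a,b] ⊆ (0,π)`,
then `g θ = π + θ - f θ` attains its max at the endpoints. -/
lemma aux_maxprin (f : ℝ → ℝ) (a b : ℝ) (hab : a < b)
    (hsub : Set.Icc a b ⊆ Set.Ioo 0 π)
    (hcont : ContinuousOn f (Set.Icc a b))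
    (hder : ∀ x ∈ Set.Ioo a b, HasDerivAt f (deriv f x) x)
    (hw : MonotoneOn (fun x => Real.sin x * (1 - deriv f x)) (Set.Icc a b)) :
    ∀ θ ∈ Set.Icc a b, π + θ - f θ ≤ max (π + a - f a) (π + b - f b) := by
  intro θ hθ
  by_contra hcon
  push_neg at hcon
  rw [max_lt_iff] at hcon
  obtain ⟨hca, hcb⟩ := hcon
  have haθ : a < θ := by
    rcases lt_or_eq_of_le hθ.1 with h' | h'
    · exact h'
    · exfalso; rw [← h'] at hca; linarith
  have hθb : θ < b := by
    rcases lt_or_eq_of_le hθ.2 with h' | h'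
    · exact h'
    · exfalso; rw [h'] at hcb; linarith
  set G : ℝ → ℝ := fun t => π + t - f t with hGdef
  have hGder : ∀ x ∈ Set.Ioo a b, HasDerivAt G (1 - deriv f x) x := by
    intro x hx
    have := ((hasDerivAt_id x).const_add π).sub (hder x hx)
    exact this
  have hGcont : ContinuousOn G (Set.Icc a b) :=
    (continuousOn_const.add continuousOn_id).sub hcont
  -- MVT on [a, θ]
  obtain ⟨u, hu, hu'⟩ := exists_hasDerivAt_eq_slope G (fun x => 1 - deriv f x) haθ
    (hGcont.mono (Set.Icc_subset_Icc le_rfl hθb.le))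
    (fun x hx => hGder x ⟨hx.1, hx.2.trans hθb⟩)
  obtain ⟨v, hv, hv'⟩ := exists_hasDerivAt_eq_slope G (fun x => 1 - deriv f x) hθb
    (hGcont.mono (Set.Icc_subset_Icc haθ.le le_rfl))
    (fun x hx => hGder x ⟨haθ.trans hx.1, hx.2⟩)
  have huIcc : u ∈ Set.Icc a b := ⟨hu.1.le, (hu.2.trans hθb).le⟩
  have hvIcc : v ∈ Set.Icc a b := ⟨(haθ.trans hv.1).le, hv.2.le⟩
  have hsinu : 0 < Real.sin u :=
    Real.sin_pos_of_pos_of_lt_pi (hsub huIcc).1 (hsub huIcc).2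
  have hsinv : 0 < Real.sin v :=
    Real.sin_pos_of_pos_of_lt_pi (hsub hvIcc).1 (hsub hvIcc).2
  have hupos : 0 < 1 - deriv f u := by
    rw [hu']
    apply div_pos _ (by linarith)
    have : G a < G θ := by simpa [hGdef] using hca
    linarith
  have hvneg : 1 - deriv f v < 0 := by
    rw [hv']
    apply div_neg_of_neg_of_pos _ (by linarith)
    have : G b < G θ := by simpa [hGdef] using hcb
    linarith
  have huv : u ≤ v := by linarith [hu.2, hv.1]
  have := hw huIcc hvIcc huv
  simp only at this
  nlinarith [mul_pos hsinu hupos, mul_pos hsinv (neg_pos.2 hvneg)]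


set_option maxHeartbeats 1000000 in
/-- Uniform convergence of a family of hemispheric type-(1,1) critical profiles
    with E(h_κ) ≤ C√κ:  for every θ* ∈ (0, π/2),
    sup_{θ ∈ [0,θ*]} |π + θ − h_κ(θ)| → 0 as κ → ∞. -/
theorem pointwise_convergence_profiles
    (C : ℝ) (hC : 0 < C) (h : ℝ → ℝ → ℝ)
    (hC1 : ∀ κ : ℝ, 4 ≤ κ → ContDiffOn ℝ 1 (h κ) (Set.Icc 0 π))
    (hC2 : ∀ κ : ℝ, 4 ≤ κ → ∀ θ ∈ Set.Ioo (0 : ℝ) π, DifferentiableAt ℝ (deriv (h κ)) θ)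
    (heq : ∀ κ : ℝ, 4 ≤ κ → ∀ θ ∈ Set.Ioo (0 : ℝ) π,
      deriv (deriv (h κ)) θ + (Real.cos θ / Real.sin θ) * deriv (h κ) θ
        - Real.sin (2 * h κ θ) / (2 * Real.sin θ ^ 2)
        - (κ / 2) * Real.sin (2 * h κ θ - 2 * θ) = 0)
    (hbd : ∀ κ : ℝ, 4 ≤ κ → h κ 0 = π ∧ h κ π = π)
    (hsym : ∀ κ : ℝ, 4 ≤ κ → ∀ θ ∈ Set.Icc (0 : ℝ) π, h κ θ + h κ (π - θ) = 2 * π)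
    (hwedge : ∀ κ : ℝ, 4 ≤ κ → ∀ θ ∈ Set.Icc (0 : ℝ) (π / 2), π ≤ h κ θ ∧ h κ θ ≤ π + θ)
    (hE : ∀ κ : ℝ, 4 ≤ κ →
      (1 / 2) * (∫ θ in (0 : ℝ)..π,
          (deriv (h κ) θ) ^ 2 * Real.sin θ
          + Real.sin (h κ θ) ^ 2 / Real.sin θ
          + κ * Real.sin (h κ θ - θ) ^ 2 * Real.sin θ)
        ≤ C * Real.sqrt κ) :
    ∀ θs ∈ Set.Ioo (0 : ℝ) (π / 2),
      Tendsto (fun κ : ℝ => sSup ((fun θ => |π + θ - h κ θ|) '' Set.Icc 0 θs))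
        atTop (nhds 0) := by
  intro θs hθs
  obtain ⟨hθs0, hθsh⟩ := hθs
  have hπ : (0:ℝ) < π := Real.pi_pos
  set θb : ℝ := (θs + π/2)/2 with hθbdef
  have hθsθb : θs < θb := by rw [hθbdef]; linarith
  have hθbh : θb < π/2 := by rw [hθbdef]; linarith
  have hθb0 : 0 < θb := hθs0.trans hθsθb
  rw [Metric.tendsto_atTop]
  intro ε hε
  set e : ℝ := min (ε/2) (θs/2) with hedef
  have he0 : 0 < e := lt_min (by linarith) (by linarith)
  have heε : e ≤ ε/2 := min_le_left _ _
  have heθs : e ≤ θs/2 := min_le_right _ _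
  have heθs' : e < θs := by linarith
  have heh : e < π/2 := by linarith
  have hsine : 0 < Real.sin e := Real.sin_pos_of_pos_of_lt_pi he0 (by linarith)
  have hsinθs : 0 < Real.sin θs := Real.sin_pos_of_pos_of_lt_pi hθs0 (by linarith)
  have hcθb : 0 < Real.cos θb := Real.cos_pos_of_mem_Ioo ⟨by linarith, hθbh⟩
  set c : ℝ := Real.sin e ^ 2 * Real.sin θs * (θb - θs) with hcdef
  have hc : 0 < c := by rw [hcdef]; have : 0 < θb - θs := by linarith
                        positivity
  refine ⟨max (max 4 (1 / (Real.sin e ^ 2 * Real.cos θb))) ((2*C/c)^2) + 1,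
    fun κ hκK => ?_⟩
  have hκ4 : (4:ℝ) ≤ κ := by
    have h1 : (4:ℝ) ≤ max (4:ℝ) (1 / (Real.sin e ^ 2 * Real.cos θb)) := le_max_left _ _
    have h2 := le_max_left (max (4:ℝ) (1 / (Real.sin e ^ 2 * Real.cos θb))) ((2*C/c)^2)
    linarith
  have hκ0 : (0:ℝ) < κ := by linarith
  have hκK0 : 1 ≤ κ * (Real.sin e ^ 2 * Real.cos θb) := by
    have h1 : 1 / (Real.sin e ^ 2 * Real.cos θb) ≤ κ := by
      have h2 := le_max_right (4:ℝ) (1 / (Real.sin e ^ 2 * Real.cos θb))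
      have h3 := le_max_left (max (4:ℝ) (1 / (Real.sin e ^ 2 * Real.cos θb))) ((2*C/c)^2)
      linarith
    rw [div_le_iff₀ (by positivity)] at h1
    linarith
  have hκK1 : (2*C/c)^2 < κ := by
    have h2 := le_max_right (max (4:ℝ) (1 / (Real.sin e ^ 2 * Real.cos θb))) ((2*C/c)^2)
    linarith
  -- basic facts about f := h κ
  have hcontf : ContinuousOn (h κ) (Set.Icc 0 π) := (hC1 κ hκ4).continuousOn
  have hdOn : DifferentiableOn ℝ (h κ) (Set.Icc 0 π) := (hC1 κ hκ4).differentiableOn one_ne_zero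
  have hdAt : ∀ x ∈ Set.Ioo (0:ℝ) π, DifferentiableAt ℝ (h κ) x := fun x hx =>
    (hdOn x (Set.Ioo_subset_Icc_self hx)).differentiableAt (Icc_mem_nhds hx.1 hx.2)
  have hder : ∀ x ∈ Set.Ioo (0:ℝ) π, HasDerivAt (h κ) (deriv (h κ) x) x := fun x hx =>
    (hdAt x hx).hasDerivAt
  -- bound on the derivative
  have hdW : ContinuousOn (derivWithin (h κ) (Set.Icc 0 π)) (Set.Icc 0 π) :=
    (hC1 κ hκ4).continuousOn_derivWithin (uniqueDiffOn_Icc hπ) le_rfl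
  obtain ⟨M, hM⟩ := isCompact_Icc.exists_bound_of_continuousOn hdW
  have hMb : ∀ x ∈ Set.Ioo (0:ℝ) π, |deriv (h κ) x| ≤ M := by
    intro x hx
    rw [← derivWithin_of_mem_nhds (Icc_mem_nhds hx.1 hx.2)]
    simpa using hM x (Set.Ioo_subset_Icc_self hx)
  set F : ℝ → ℝ := fun θ =>
      (deriv (h κ) θ) ^ 2 * Real.sin θ + Real.sin (h κ θ) ^ 2 / Real.sin θ
        + κ * Real.sin (h κ θ - θ) ^ 2 * Real.sin θ with hFdef
  have hEκ : (1/2) * (∫ θ in (0:ℝ)..π, F θ) ≤ C * Real.sqrt κ := by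
    simp only [hFdef]
    exact hE κ hκ4
  have hFnonneg : ∀ θ ∈ Set.Icc (0:ℝ) π, 0 ≤ F θ := by
    intro θ hθ
    have hs : 0 ≤ Real.sin θ := Real.sin_nonneg_of_nonneg_of_le_pi hθ.1 hθ.2
    have t1 : 0 ≤ (deriv (h κ) θ) ^ 2 * Real.sin θ := mul_nonneg (sq_nonneg _) hs
    have t2 : 0 ≤ Real.sin (h κ θ) ^ 2 / Real.sin θ := div_nonneg (sq_nonneg _) hs
    have t3 : 0 ≤ κ * Real.sin (h κ θ - θ) ^ 2 * Real.sin θ :=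
      mul_nonneg (mul_nonneg hκ0.le (sq_nonneg _)) hs
    rw [hFdef]
    dsimp only
    linarith
  -- sin(h κ x)^2 ≤ sin(x)^2 on (0, π)
  have haux : ∀ x ∈ Set.Ioo (0:ℝ) π, x ≤ π/2 → Real.sin (h κ x) ^ 2 ≤ Real.sin x ^ 2 := by
    intro x hx hx2
    have hw := hwedge κ hκ4 x ⟨hx.1.le, hx2⟩
    have h1 : Real.sin (h κ x) = -Real.sin (h κ x - π) := by
      have hp := Real.sin_add_pi (h κ x - π)
      rw [show h κ x - π + π = h κ x by ring] at hp
      exact hp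
    have h2 : Real.sin (h κ x - π) ≤ Real.sin x :=
      Real.sin_le_sin_of_le_of_le_pi_div_two (by linarith [hw.1]) hx2 (by linarith [hw.2])
    have h3 : 0 ≤ Real.sin (h κ x - π) :=
      Real.sin_nonneg_of_nonneg_of_le_pi (by linarith [hw.1]) (by linarith [hw.2, hx.2])
    rw [h1, neg_sq]
    nlinarith
  have hsinb : ∀ x ∈ Set.Ioo (0:ℝ) π, Real.sin (h κ x) ^ 2 ≤ Real.sin x ^ 2 := by
    intro x hx
    rcases le_or_gt x (π/2) with h' | h'
    · exact haux x hx h'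
    · have hs := hsym κ hκ4 x ⟨hx.1.le, hx.2.le⟩
      have h1 : Real.sin (h κ x) = -Real.sin (h κ (π - x)) := by
        rw [show h κ x = -(h κ (π - x)) + 2*π by linarith, Real.sin_add_two_pi, Real.sin_neg]
      have hmem : π - x ∈ Set.Ioo (0:ℝ) π := ⟨by linarith [hx.2], by linarith [hx.1]⟩
      have h2 := haux (π - x) hmem (by linarith)
      rw [Real.sin_pi_sub] at h2
      rw [h1, neg_sq]
      exact h2
  have hFcont : ∀ x ∈ Set.Ioo (0:ℝ) π, ContinuousAt F x := by
    intro x hx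
    have hfc : ContinuousAt (h κ) x := (hdAt x hx).continuousAt
    have hdc : ContinuousAt (deriv (h κ)) x := (hC2 κ hκ4 x hx).continuousAt
    have hsx : Real.sin x ≠ 0 := ne_of_gt (Real.sin_pos_of_pos_of_lt_pi hx.1 hx.2)
    rw [hFdef]
    apply ContinuousAt.add
    apply ContinuousAt.add
    · exact (hdc.pow 2).mul Real.continuous_sin.continuousAt
    · exact ((Real.continuous_sin.continuousAt.comp hfc).pow 2).div
        Real.continuous_sin.continuousAt hsx
    · exact (continuousAt_const.mul
        ((Real.continuous_sin.continuousAt.comp (hfc.sub continuousAt_id)).pow 2)).mul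
        Real.continuous_sin.continuousAt
  have hFbound : ∀ x ∈ Set.Ioo (0:ℝ) π, F x ≤ M^2 + 1 + κ := by
    intro x hx
    have hsx : 0 < Real.sin x := Real.sin_pos_of_pos_of_lt_pi hx.1 hx.2
    have hs1 : Real.sin x ≤ 1 := Real.sin_le_one x
    have hd2 : (deriv (h κ) x) ^ 2 ≤ M ^ 2 := by
      have hob := abs_le.1 (hMb x hx)
      exact sq_le_sq' hob.1 hob.2
    have t1 : (deriv (h κ) x) ^ 2 * Real.sin x ≤ M ^ 2 := by
      calc (deriv (h κ) x) ^ 2 * Real.sin x ≤ (deriv (h κ) x) ^ 2 * 1 :=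
            mul_le_mul_of_nonneg_left hs1 (sq_nonneg _)
        _ = (deriv (h κ) x) ^ 2 := mul_one _
        _ ≤ M ^ 2 := hd2
    have t2 : Real.sin (h κ x) ^ 2 / Real.sin x ≤ 1 := by
      rw [div_le_iff₀ hsx, one_mul]
      calc Real.sin (h κ x) ^ 2 ≤ Real.sin x ^ 2 := hsinb x hx
        _ = Real.sin x * Real.sin x := sq (Real.sin x)
        _ ≤ 1 * Real.sin x := mul_le_mul_of_nonneg_right hs1 hsx.le
        _ = Real.sin x := one_mul _
    have t3 : κ * Real.sin (h κ x - x) ^ 2 * Real.sin x ≤ κ := by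
      calc κ * Real.sin (h κ x - x) ^ 2 * Real.sin x ≤ κ * 1 * 1 :=
            mul_le_mul (mul_le_mul_of_nonneg_left (Real.sin_sq_le_one _) hκ0.le) hs1
              hsx.le (by positivity)
        _ = κ := by ring
    rw [hFdef]
    dsimp only
    linarith
  have hFint : IntervalIntegrable F MeasureTheory.volume 0 π := by
    rw [intervalIntegrable_iff_integrableOn_Ioc_of_le hπ.le,
      integrableOn_Ioc_iff_integrableOn_Ioo]
    refine ⟨(ContinuousOn.aestronglyMeasurable
      (fun x hx => (hFcont x hx).continuousWithinAt) measurableSet_Ioo), ?_⟩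
    apply MeasureTheory.HasFiniteIntegral.restrict_of_bounded (C := M^2 + 1 + κ)
    · rw [Real.volume_Ioo]; exact ENNReal.ofReal_lt_top
    · refine (MeasureTheory.ae_restrict_iff' measurableSet_Ioo).2
        (Filter.Eventually.of_forall fun x hx => ?_)
      rw [Real.norm_eq_abs, abs_of_nonneg (hFnonneg x (Set.Ioo_subset_Icc_self hx))]
      exact hFbound x hx
  have hFsub : ∀ a b : ℝ, 0 ≤ a → a ≤ b → b ≤ π →
      IntervalIntegrable F MeasureTheory.volume a b := by
    intro a b ha hab hb
    apply hFint.mono_set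
    rw [Set.uIcc_of_le hab, Set.uIcc_of_le hπ.le]
    exact Set.Icc_subset_Icc ha hb
  -- Step A: there is a point in [θs, θb] where the profile is close to π + θ
  have hstepA : ∃ θ₁ ∈ Set.Icc θs θb, π + θ₁ - h κ θ₁ ≤ e := by
    by_contra hcon
    push_neg at hcon
    have hlow : ∀ u ∈ Set.Icc θs θb, κ * Real.sin e ^ 2 * Real.sin θs ≤ F u := by
      intro u hu
      have huI : u ∈ Set.Icc (0:ℝ) (π/2) := ⟨by linarith [hu.1], by linarith [hu.2]⟩
      have hw := hwedge κ hκ4 u huI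
      have hgu := hcon u hu
      have hs0 : 0 ≤ Real.sin u := Real.sin_nonneg_of_nonneg_of_le_pi (by linarith [hu.1])
        (by linarith [hu.2])
      have hs1 : Real.sin (h κ u - u) = Real.sin (π + u - h κ u) := by
        rw [show h κ u - u = π - (π + u - h κ u) by ring, Real.sin_pi_sub]
      have hs2 : Real.sin e ≤ Real.sin (π + u - h κ u) :=
        Real.sin_le_sin_of_le_of_le_pi_div_two (by linarith)
          (by linarith [hw.1, hu.2]) hgu.le
      have hs3 : Real.sin θs ≤ Real.sin u :=
        Real.sin_le_sin_of_le_of_le_pi_div_two (by linarith) (by linarith [hu.2]) hu.1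
      have h4 : Real.sin e ^ 2 ≤ Real.sin (h κ u - u) ^ 2 := by
        rw [hs1]; exact pow_le_pow_left₀ hsine.le hs2 2
      have h5 : κ * Real.sin e ^ 2 * Real.sin θs ≤ κ * Real.sin (h κ u - u) ^ 2 * Real.sin u :=
        mul_le_mul (mul_le_mul_of_nonneg_left h4 hκ0.le) hs3 hsinθs.le
          (mul_nonneg hκ0.le (sq_nonneg _))
      have humem : u ∈ Set.Ioo (0:ℝ) π := ⟨by linarith [hu.1], by linarith [hu.2]⟩
      have t1 : 0 ≤ (deriv (h κ) u) ^ 2 * Real.sin u := mul_nonneg (sq_nonneg _) hs0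
      have t2 : 0 ≤ Real.sin (h κ u) ^ 2 / Real.sin u := div_nonneg (sq_nonneg _) hs0
      rw [hFdef]
      dsimp only
      linarith
    have hlowint : (θb - θs) * (κ * Real.sin e ^ 2 * Real.sin θs)
        ≤ ∫ θ in θs..θb, F θ := by
      have hm2 : (∫ _ in θs..θb, (κ * Real.sin e ^ 2 * Real.sin θs : ℝ))
          ≤ ∫ θ in θs..θb, F θ :=
        intervalIntegral.integral_mono_on (f := fun _ => κ * Real.sin e ^ 2 * Real.sin θs)
          (g := F) hθsθb.le intervalIntegrable_const
          (hFsub θs θb hθs0.le hθsθb.le (by linarith)) hlow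
      rwa [intervalIntegral.integral_const, smul_eq_mul] at hm2
    have h0a : 0 ≤ ∫ θ in (0:ℝ)..θs, F θ :=
      intervalIntegral.integral_nonneg hθs0.le
        (fun u hu => hFnonneg u ⟨hu.1, by linarith [hu.2]⟩)
    have h0b : 0 ≤ ∫ θ in θb..π, F θ :=
      intervalIntegral.integral_nonneg (by linarith)
        (fun u hu => hFnonneg u ⟨by linarith [hu.1], hu.2⟩)
    have hsplit2 := intervalIntegral.integral_add_adjacent_intervals
      (hFsub 0 θs le_rfl hθs0.le (by linarith))
      (hFsub θs θb hθs0.le hθsθb.le (by linarith))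
    have hsplit1 := intervalIntegral.integral_add_adjacent_intervals
      (hFsub 0 θb le_rfl hθb0.le (by linarith))
      (hFsub θb π hθb0.le (by linarith) le_rfl)
    have hchain : (θb - θs) * (κ * Real.sin e ^ 2 * Real.sin θs) ≤ 2 * (C * Real.sqrt κ) := by
      linarith
    have hsq : Real.sqrt κ * Real.sqrt κ = κ := Real.mul_self_sqrt hκ0.le
    have hsqpos : 0 < Real.sqrt κ := Real.sqrt_pos.2 hκ0
    have h1 : Real.sqrt κ * c ≤ 2 * C := by
      have hl : Real.sqrt κ * (Real.sqrt κ * c)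
          = (θb - θs) * (κ * Real.sin e ^ 2 * Real.sin θs) := by
        calc Real.sqrt κ * (Real.sqrt κ * c) = (Real.sqrt κ * Real.sqrt κ) * c := by ring
          _ = κ * c := by rw [hsq]
          _ = (θb - θs) * (κ * Real.sin e ^ 2 * Real.sin θs) := by rw [hcdef]; ring
      have h2 : Real.sqrt κ * (Real.sqrt κ * c) ≤ Real.sqrt κ * (2 * C) := by
        rw [hl]
        calc (θb - θs) * (κ * Real.sin e ^ 2 * Real.sin θs) ≤ 2 * (C * Real.sqrt κ) := hchain
          _ = Real.sqrt κ * (2 * C) := by ring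
      exact le_of_mul_le_mul_left h2 hsqpos
    have h3 : Real.sqrt κ ≤ 2*C/c := by rw [le_div_iff₀ hc]; linarith
    have h4 : κ ≤ (2*C/c)^2 := by
      have h5 : Real.sqrt κ * Real.sqrt κ ≤ (2*C/c) * (2*C/c) :=
        mul_le_mul h3 h3 (Real.sqrt_nonneg κ) (by positivity)
      calc κ = Real.sqrt κ * Real.sqrt κ := hsq.symm
        _ ≤ (2*C/c) * (2*C/c) := h5
        _ = (2*C/c)^2 := by ring
    linarith
  obtain ⟨θ₁, hθ₁mem, hθ₁⟩ := hstepA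
  have heθ₁ : e < θ₁ := lt_of_lt_of_le heθs' hθ₁mem.1
  have hsub2 : Set.Icc e θ₁ ⊆ Set.Ioo 0 π := by
    intro x hx
    exact ⟨lt_of_lt_of_le he0 hx.1, by
      have := hx.2.trans hθ₁mem.2
      linarith⟩
  have hmono := aux_w_mono κ (h κ) e θb he0 hθbh (hC2 κ hκ4) (heq κ hκ4)
    (fun x hx => hwedge κ hκ4 x ⟨he0.le.trans hx.1, hx.2.trans hθbh.le⟩) hκK0
  have hmono' : MonotoneOn (fun x => Real.sin x * (1 - deriv (h κ) x)) (Set.Icc e θ₁) :=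
    hmono.mono (Set.Icc_subset_Icc le_rfl hθ₁mem.2)
  have hmaxp := aux_maxprin (h κ) e θ₁ heθ₁ hsub2
    (hcontf.mono (fun x hx => ⟨he0.le.trans hx.1, by
      have := hx.2.trans hθ₁mem.2; linarith⟩))
    (fun x hx => hder x (hsub2 (Set.Ioo_subset_Icc_self hx))) hmono'
  -- final pointwise bound
  have hbound : ∀ θ ∈ Set.Icc (0:ℝ) θs, |π + θ - h κ θ| ≤ e := by
    intro θ hθ
    have hθπ2 : θ ∈ Set.Icc (0:ℝ) (π/2) := ⟨hθ.1, by linarith [hθ.2]⟩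
    have hw := hwedge κ hκ4 θ hθπ2
    rw [abs_of_nonneg (by linarith [hw.2])]
    rcases le_or_gt θ e with h' | h'
    · linarith [hw.1]
    · have hmem : θ ∈ Set.Icc e θ₁ := ⟨h'.le, hθ.2.trans hθ₁mem.1⟩
      have hge : π + e - h κ e ≤ e := by
        have hwe := hwedge κ hκ4 e ⟨he0.le, heh.le⟩
        linarith [hwe.1]
      have hmax : max (π + e - h κ e) (π + θ₁ - h κ θ₁) ≤ e := max_le hge hθ₁
      linarith [hmaxp θ hmem]
  have hSle : sSup ((fun θ => |π + θ - h κ θ|) '' Set.Icc 0 θs) ≤ e := by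
    apply Real.sSup_le _ he0.le
    rintro x ⟨θ, hθ, rfl⟩
    exact hbound θ hθ
  have hSnn : 0 ≤ sSup ((fun θ => |π + θ - h κ θ|) '' Set.Icc 0 θs) := by
    apply Real.sSup_nonneg
    rintro x ⟨θ, hθ, rfl⟩
    exact abs_nonneg _
  rw [Real.dist_eq, sub_zero, abs_of_nonneg hSnn]
  linarith
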